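/- Let a ≠ 0 and h ≠ 0 be real numbers, M the quotient of H × ℝ by the ℤ²-action (m, n) • (z, t) = (z + m·a, t + n·h), and π : H × ℝ → M the quotient map. For every s ∈ ℝ, the torus 𝕋(s) = π({z : im z = e^s} × ℝ), with the subspace topology from M, is homeomorphic to the 2-torus AddCircle a × AddCircle h. Moreover the sets 𝕋(s), s ∈ ℝ, are pairwise disjoint and their union is all of M (they foliate M). -/

import Mathlib

open UpperHalfPlane

/-- The action of `(m, n) ∈ ℤ²` on `ℍ × ℝ`: `(z, t) ↦ (z + m·a, t + n·h)`. -/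
def deckTranslate (a h : ℝ) (mn : ℤ × ℤ) (p : UpperHalfPlane × ℝ) : UpperHalfPlane × ℝ :=
  (((mn.1 : ℝ) * a) +ᵥ p.1, p.2 + (mn.2 : ℝ) * h)

/-- The orbit relation of the `ℤ²`-action on `ℍ × ℝ`. -/
def orbitRel (a h : ℝ) (p q : UpperHalfPlane × ℝ) : Prop :=
  ∃ mn : ℤ × ℤ, deckTranslate a h mn q = p

/-- The torus `𝕋(s) ⊆ M = (ℍ × ℝ)/ℤ²`: the image under the quotient map of
`c(eˢ) × ℝ`, where `c(r) = {z : im z = r}` is a horocycle. -/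
def torus (a h : ℝ) (s : ℝ) : Set (Quot (orbitRel a h)) :=
  Quot.mk (orbitRel a h) ''
    ({z : UpperHalfPlane | z.im = Real.exp s} ×ˢ (Set.univ : Set ℝ))

/-- A point of `ℍ` at height `eˢ` with real part `x`. -/
noncomputable def hpt (s x : ℝ) : UpperHalfPlane :=
  ⟨⟨x, Real.exp s⟩, Real.exp_pos s⟩

lemma hpt_im (s x : ℝ) : (hpt s x).im = Real.exp s := rfl

lemma hpt_re (s x : ℝ) : (hpt s x).re = x := rfl

lemma continuous_hpt (s : ℝ) : Continuous (hpt s) := by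
  rw [UpperHalfPlane.isEmbedding_coe.continuous_iff]
  have : UpperHalfPlane.coe ∘ hpt s =
      fun x : ℝ => (x : ℂ) + (Real.exp s : ℂ) * Complex.I := by
    funext x
    exact Complex.mk_eq_add_mul_I x (Real.exp s)
  rw [this]
  exact Complex.continuous_ofReal.add continuous_const

lemma addCircle_coe_add_int_mul (c x : ℝ) (m : ℤ) :
    ((x + (m : ℝ) * c : ℝ) : AddCircle c) = (x : AddCircle c) := by
  rw [QuotientAddGroup.eq_iff_sub_mem]
  refine AddSubgroup.mem_zmultiples_iff.mpr ⟨m, ?_⟩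
  simp [zsmul_eq_mul]

/-- The invariant map `M → AddCircle a × AddCircle h`, `[z, t] ↦ (re z, t)`. -/
noncomputable def gbar (a h : ℝ) : Quot (orbitRel a h) → AddCircle a × AddCircle h :=
  Quot.lift (fun p => ((p.1.re : AddCircle a), (p.2 : AddCircle h))) (by
    rintro p q ⟨mn, rfl⟩
    simp only [deckTranslate, UpperHalfPlane.vadd_re]
    rw [Prod.mk.injEq]
    constructor
    · rw [add_comm]; exact addCircle_coe_add_int_mul a _ mn.1
    · exact addCircle_coe_add_int_mul h _ mn.2)

lemma continuous_gbar (a h : ℝ) : Continuous (gbar a h) := by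
  apply continuous_quot_lift
  exact ((continuous_quotient_mk'.comp (UpperHalfPlane.continuous_re.comp continuous_fst)).prodMk
    (continuous_quotient_mk'.comp continuous_snd))

/-- The invariant height map `M → ℝ`, `[z, t] ↦ im z`. -/
def imbar (a h : ℝ) : Quot (orbitRel a h) → ℝ :=
  Quot.lift (fun p => p.1.im) (by
    rintro p q ⟨mn, rfl⟩
    simp [deckTranslate, UpperHalfPlane.vadd_im])

/-- The map `AddCircle a × AddCircle h → M` landing in `𝕋(s)`. -/
noncomputable def psi (a h s : ℝ) (p : AddCircle a × AddCircle h) : Quot (orbitRel a h) :=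
  Quotient.liftOn₂' p.1 p.2 (fun x t => Quot.mk (orbitRel a h) (hpt s x, t)) (by
    intro x t x' t' hx ht
    rw [QuotientAddGroup.leftRel_apply] at hx ht
    obtain ⟨m, hm⟩ := AddSubgroup.mem_zmultiples_iff.mp hx
    obtain ⟨n, hn⟩ := AddSubgroup.mem_zmultiples_iff.mp ht
    rw [zsmul_eq_mul] at hm hn
    apply Quot.sound
    refine ⟨(-m, -n), ?_⟩
    simp only [deckTranslate, Prod.mk.injEq]
    constructor
    · apply UpperHalfPlane.ext
      apply Complex.ext
      · show ((-m : ℤ) : ℝ) * a + x' = x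
        push_cast
        linarith
      · show (0 : ℝ) + Real.exp s = Real.exp s
        ring
    · show t' + ((-n : ℤ) : ℝ) * h = t
      push_cast
      linarith)

lemma psi_mk (a h s x t : ℝ) :
    psi a h s ((x : AddCircle a), (t : AddCircle h)) = Quot.mk (orbitRel a h) (hpt s x, t) := by
  rfl

lemma psi_mem_torus (a h s : ℝ) (p : AddCircle a × AddCircle h) : psi a h s p ∈ torus a h s := by
  obtain ⟨x, t⟩ := p
  refine Quotient.inductionOn₂' x t fun x t => ?_
  exact ⟨(hpt s x, t), ⟨hpt_im s x, trivial⟩, rfl⟩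

lemma hpt_eq (s : ℝ) (z : UpperHalfPlane) (hz : z.im = Real.exp s) : hpt s z.re = z := by
  apply UpperHalfPlane.ext
  apply Complex.ext
  · rfl
  · show Real.exp s = (z : ℂ).im
    rw [UpperHalfPlane.coe_im, hz]

lemma gbar_psi (a h s : ℝ) (p : AddCircle a × AddCircle h) : gbar a h (psi a h s p) = p := by
  obtain ⟨x, t⟩ := p
  refine Quotient.inductionOn₂' x t fun x t => ?_
  show (((hpt s x).re : AddCircle a), (t : AddCircle h)) = _
  rw [hpt_re]

lemma psi_gbar (a h s : ℝ) (z : UpperHalfPlane) (t : ℝ) (hz : z.im = Real.exp s) :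
    psi a h s (gbar a h (Quot.mk (orbitRel a h) (z, t))) = Quot.mk (orbitRel a h) (z, t) := by
  show psi a h s ((z.re : AddCircle a), (t : AddCircle h)) = _
  rw [psi_mk, hpt_eq s z hz]

lemma continuous_psi (a h s : ℝ) : Continuous (psi a h s) := by
  have hq : Topology.IsQuotientMap (fun p : ℝ × ℝ => ((p.1 : AddCircle a), (p.2 : AddCircle h))) := by
    apply IsOpenMap.isQuotientMap
    · exact QuotientAddGroup.isOpenMap_coe.prodMap QuotientAddGroup.isOpenMap_coe
    · exact (continuous_quotient_mk'.comp continuous_fst).prodMk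
        (continuous_quotient_mk'.comp continuous_snd)
    · rintro ⟨x, t⟩
      refine Quotient.inductionOn₂' x t fun x t => ?_
      exact ⟨(x, t), rfl⟩
  rw [hq.continuous_iff]
  show Continuous fun p : ℝ × ℝ => Quot.mk (orbitRel a h) (hpt s p.1, p.2)
  exact continuous_quot_mk.comp (((continuous_hpt s).comp continuous_fst).prodMk continuous_snd)

/-- For `a ≠ 0` and `h ≠ 0`, each torus `𝕋(s)` in the quotient `M = (ℍ × ℝ)/ℤ²` (with the
subspace topology) is homeomorphic to the 2-torus `AddCircle a × AddCircle h`; moreover the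
tori `𝕋(s)`, `s ∈ ℝ`, are pairwise disjoint and their union is all of `M`. -/
theorem tori_foliate_quotient (a h : ℝ) (ha : a ≠ 0) (hh : h ≠ 0) :
    (∀ s : ℝ, Nonempty (↥(torus a h s) ≃ₜ AddCircle a × AddCircle h)) ∧
    (∀ s s' : ℝ, s ≠ s' → Disjoint (torus a h s) (torus a h s')) ∧
    (⋃ s : ℝ, torus a h s) = Set.univ := by
  refine ⟨?_, ?_, ?_⟩
  · intro s
    refine ⟨{ toFun := fun q => gbar a h q.1
              invFun := fun p => ⟨psi a h s p, psi_mem_torus a h s p⟩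
              left_inv := ?_
              right_inv := gbar_psi a h s
              continuous_toFun := (continuous_gbar a h).comp continuous_subtype_val
              continuous_invFun := (continuous_psi a h s).subtype_mk _ }⟩
    rintro ⟨q, ⟨⟨z, t⟩, ⟨hz, -⟩, rfl⟩⟩
    exact Subtype.ext (psi_gbar a h s z t hz)
  · intro s s' hss
    rw [Set.disjoint_left]
    rintro q ⟨⟨z, t⟩, ⟨hz, -⟩, rfl⟩ ⟨⟨z', t'⟩, ⟨hz', -⟩, hq⟩
    have : imbar a h (Quot.mk _ (z', t')) = imbar a h (Quot.mk _ (z, t)) := by rw [hq]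
    simp only [imbar] at this
    rw [hz, hz'] at this
    exact hss ((Real.exp_injective this).symm)
  · ext q
    simp only [Set.mem_iUnion, Set.mem_univ, iff_true]
    obtain ⟨⟨z, t⟩, rfl⟩ := Quot.exists_rep q
    exact ⟨Real.log z.im, ⟨(z, t), ⟨(Real.exp_log z.im_pos).symm, trivial⟩, rfl⟩⟩
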